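/- Every n-vertex d-regular graph with d odd has a ⌈d/2⌉-cohesive set of at most n/2 + 1 vertices. -/

import Mathlib

open Finset

open scoped Classical in
noncomputable def degIn {V : Type*} (G : SimpleGraph V) [DecidableRel G.Adj] (S : Finset V) (x : V) : ℕ :=
  (S.filter fun y => G.Adj x y).card

set_option linter.unusedSectionVars false

section Aux

variable {V : Type*} [Fintype V] [DecidableEq V] (G : SimpleGraph V) [DecidableRel G.Adj]

lemma degIn_eq (S : Finset V) (x : V) : degIn G S x = (S.filter fun y => G.Adj x y).card := rfl

noncomputable def QQ (S : Finset V) : ℕ := ∑ u ∈ S, degIn G S u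

lemma degIn_insert (S : Finset V) (y : V) (hy : y ∉ S) (u : V) :
    degIn G (insert y S) u = degIn G S u + if G.Adj u y then 1 else 0 := by
  rw [degIn_eq, degIn_eq, filter_insert]
  split
  · rw [card_insert_of_notMem (fun h => hy (mem_filter.mp h).1)]
  · simp

lemma sum_ite_adj (S : Finset V) (y : V) :
    (∑ u ∈ S, if G.Adj u y then 1 else 0) = degIn G S y := by
  rw [degIn_eq, Finset.sum_boole]
  norm_cast
  apply congrArg
  apply filter_congr
  intro u _
  simp [G.adj_comm]

end Aux

section Aux2
variable {V : Type*} [Fintype V] [DecidableEq V] (G : SimpleGraph V) [DecidableRel G.Adj]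

lemma QQ_insert (S : Finset V) (y : V) (hy : y ∉ S) :
    QQ G (insert y S) = QQ G S + 2 * degIn G S y := by
  unfold QQ
  rw [sum_insert hy]
  have h1 : degIn G (insert y S) y = degIn G S y := by
    rw [degIn_insert G S y hy y]; simp
  have h2 : ∀ u ∈ S, degIn G (insert y S) u = degIn G S u + if G.Adj u y then 1 else 0 :=
    fun u _ => degIn_insert G S y hy u
  rw [sum_congr rfl h2, sum_add_distrib, sum_ite_adj, h1]
  ring

lemma degIn_erase_self (S : Finset V) (x : V) : degIn G (S.erase x) x = degIn G S x := by
  rw [degIn_eq, degIn_eq, filter_erase]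
  rw [Finset.erase_eq_of_notMem (by simp)]

lemma degIn_erase (S : Finset V) (x : V) (hx : x ∈ S) (u : V) :
    degIn G S u = degIn G (S.erase x) u + if G.Adj u x then 1 else 0 := by
  conv_lhs => rw [← insert_erase hx]
  exact degIn_insert G _ x (notMem_erase x S) u

lemma degIn_add_compl (S : Finset V) (x : V) :
    degIn G S x + degIn G Sᶜ x = G.degree x := by
  rw [degIn_eq, degIn_eq,
    ← card_union_of_disjoint (Finset.disjoint_filter_filter disjoint_compl_right),
    ← filter_union, union_compl]
  rw [← SimpleGraph.card_neighborFinset_eq_degree, SimpleGraph.neighborFinset_eq_filter]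

lemma sum_degIn_comm (C D : Finset V) :
    ∑ x ∈ C, degIn G D x = ∑ x ∈ D, degIn G C x := by
  have h : ∀ (S : Finset V) (y : V), degIn G S y = ∑ u ∈ S, if G.Adj u y then 1 else 0 :=
    fun S y => (sum_ite_adj G S y).symm
  rw [sum_congr rfl (fun x _ => h D x), sum_comm]
  refine sum_congr rfl fun y _ => ?_
  rw [h C y]
  refine sum_congr rfl fun u _ => ?_
  simp [G.adj_comm]

lemma QQ_compl {d : ℕ} (hreg : G.IsRegularOfDegree d) (S : Finset V) (h : S.card = Sᶜ.card) :
    QQ G S = QQ G Sᶜ := by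
  have key : ∀ T : Finset V, QQ G T + ∑ x ∈ T, degIn G Tᶜ x = d * T.card := by
    intro T
    unfold QQ
    rw [← sum_add_distrib]
    rw [sum_congr rfl (fun x _ => (degIn_add_compl G T x).trans (hreg x))]
    rw [sum_const, smul_eq_mul, mul_comm]
  have h1 := key S
  have h2 := key Sᶜ
  rw [compl_compl] at h2
  have h3 := sum_degIn_comm G S Sᶜ
  rw [h] at h1
  omega

lemma cohesive_aux (c m : ℕ) (hreg : G.IsRegularOfDegree (2*c+1)) (A : Finset V)
    (hA : A.card = m) (hmax : ∀ C : Finset V, C.card = m → QQ G C ≤ QQ G A)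
    (x : V) (hx : x ∈ A) (hdx : degIn G A x ≤ c) :
    ∀ u ∈ insert x Aᶜ, c + 1 ≤ degIn G (insert x Aᶜ) u := by
  have hxc : x ∉ Aᶜ := by simp [hx]
  intro u hu
  rcases mem_insert.mp hu with rfl | huA
  · have h1 : degIn G (insert u Aᶜ) u = degIn G Aᶜ u := by
      rw [degIn_insert G Aᶜ u hxc u]; simp
    have h2 := degIn_add_compl G A u
    have h3 : G.degree u = 2*c+1 := hreg u
    omega
  · have hyA : u ∉ A := mem_compl.mp huA
    have hyE : u ∉ A.erase x := fun h => hyA (mem_of_mem_erase h)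
    have hm1 : 1 ≤ m := hA ▸ card_pos.mpr ⟨x, hx⟩
    have hcard : (insert u (A.erase x)).card = m := by
      rw [card_insert_of_notMem hyE, card_erase_of_mem hx, hA]; omega
    have hq := hmax _ hcard
    have e1 : QQ G A = QQ G (A.erase x) + 2 * degIn G (A.erase x) x := by
      conv_lhs => rw [← insert_erase hx]
      exact QQ_insert G _ x (notMem_erase x A)
    have e2 : QQ G (insert u (A.erase x)) = QQ G (A.erase x) + 2 * degIn G (A.erase x) u :=
      QQ_insert G _ u hyE
    have e3 : degIn G (A.erase x) x = degIn G A x := degIn_erase_self G A x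
    have h5 := degIn_erase G A x hx u
    have h6 : degIn G A u + degIn G Aᶜ u = 2*c+1 := (degIn_add_compl G A u).trans (hreg u)
    have h7 := degIn_insert G Aᶜ x hxc u
    by_cases hadj : G.Adj u x <;> simp [hadj] at h5 h7 <;> omega

end Aux2

/-- Every d-regular graph with d odd has a ⌈d/2⌉-cohesive set of at most n/2 + 1 vertices. -/
theorem cohesive_set_odd {V : Type*} [Fintype V] [DecidableEq V] [Nonempty V]
    (G : SimpleGraph V) [DecidableRel G.Adj] (d : ℕ) (hreg : G.IsRegularOfDegree d) (hd : Odd d) :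
    ∃ S : Finset V, S.Nonempty ∧ S.card ≤ Fintype.card V / 2 + 1 ∧
      ∀ x ∈ S, (d + 1) / 2 ≤ degIn G S x := by
  classical
  obtain ⟨c, hc⟩ := hd
  subst hc
  have hsum := G.sum_degrees_eq_twice_card_edges
  have hcard : Fintype.card V * (2*c+1) = 2 * G.edgeFinset.card := by
    rw [← hsum]
    rw [sum_congr rfl (fun v _ => hreg v), sum_const, smul_eq_mul, card_univ]
  have heven : Even (Fintype.card V) := by
    have h1 : Even (Fintype.card V * (2*c+1)) := ⟨G.edgeFinset.card, by omega⟩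
    rcases Nat.even_mul.mp h1 with h | h
    · exact h
    · obtain ⟨t, ht⟩ := h; omega
  obtain ⟨m, hm⟩ := heven
  have hm1 : 1 ≤ m := by
    have := Fintype.card_pos (α := V); omega
  obtain ⟨A0, _, hA0⟩ := exists_subset_card_eq (s := (univ : Finset V)) (n := m) (by rw [card_univ]; omega)
  obtain ⟨A, hAmem, hAmax⟩ := Finset.exists_max_image
    ((univ : Finset (Finset V)).filter fun C => C.card = m) (QQ G) ⟨A0, by simp [hA0]⟩
  have hA : A.card = m := (mem_filter.mp hAmem).2
  have hmax : ∀ C : Finset V, C.card = m → QQ G C ≤ QQ G A := fun C hC => hAmax C (by simp [hC])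
  have hAc : Aᶜ.card = m := by rw [card_compl, hA]; omega
  have hn2 : Fintype.card V / 2 = m := by omega
  by_cases h1 : ∃ x ∈ A, degIn G A x ≤ c
  · obtain ⟨x, hx, hdx⟩ := h1
    refine ⟨insert x Aᶜ, insert_nonempty _ _, ?_, ?_⟩
    · rw [card_insert_of_notMem (by simp [hx]), hAc]; omega
    · intro u hu
      have := cohesive_aux G c m hreg A hA hmax x hx hdx u hu
      omega
  · by_cases h2 : ∃ y ∈ Aᶜ, degIn G Aᶜ y ≤ c
    · obtain ⟨y, hy, hdy⟩ := h2
      have hmax' : ∀ C : Finset V, C.card = m → QQ G C ≤ QQ G Aᶜ := by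
        intro C hC
        rw [← QQ_compl G hreg A (by omega)]
        exact hmax C hC
      have hcc : (Aᶜ)ᶜ = A := compl_compl A
      refine ⟨insert y A, insert_nonempty _ _, ?_, ?_⟩
      · rw [card_insert_of_notMem (mem_compl.mp hy), hA]; omega
      · intro u hu
        have h := cohesive_aux G c m hreg Aᶜ hAc hmax' y hy hdy u (by rwa [hcc])
        rw [hcc] at h
        omega
    · push_neg at h1 h2
      refine ⟨A, card_pos.mp (by omega), by omega, ?_⟩
      intro u hu
      have := h1 u hu
      omega
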